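/- Let f be a transcendental entire function, let R0 > 0 be such that M(r, f) > r for all r ≥ R0, and let ε : [R0, ∞) → (0, 1) be a nonincreasing function such that ε(M^n(r, f)) ≥ ε(r)^{n+1} for all r ≥ R0 and all n ≥ 1. Then there exists R1 ≥ R0 such that M(R, f) ≥ ε(r)^{-3} M(ε(r)R, f) for all R ≥ r ≥ R1. -/

import Mathlib

/-- The maximum modulus function `M(r, f) = max_{|z| = r} |f z|`. -/
noncomputable def maxMod (f : ℂ → ℂ) (r : ℝ) : ℝ :=
  sSup ((fun z => ‖f z‖) '' Metric.sphere (0 : ℂ) r)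

/-- `f` is a transcendental entire function: differentiable on all of `ℂ`
and not (the evaluation of) a polynomial. -/
def EntireTranscendental (f : ℂ → ℂ) : Prop :=
  Differentiable ℂ f ∧ ¬∃ p : Polynomial ℂ, ∀ z, f z = p.eval z

open Metric Set Filter

lemma maxMod_attained (f : ℂ → ℂ) (hc : Continuous f) {r : ℝ} (hr : 0 ≤ r) :
    ∃ z : ℂ, ‖z‖ = r ∧ maxMod f r = ‖f z‖ := by
  have hK : IsCompact ((fun z => ‖f z‖) '' Metric.sphere (0 : ℂ) r) :=
    (isCompact_sphere 0 r).image (continuous_norm.comp hc)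
  have hne : ((fun z => ‖f z‖) '' Metric.sphere (0 : ℂ) r).Nonempty :=
    (NormedSpace.sphere_nonempty.mpr hr).image _
  have := hK.sSup_mem hne
  obtain ⟨z, hz, hz2⟩ := this
  exact ⟨z, by simpa using mem_sphere_zero_iff_norm.mp hz, hz2.symm⟩

lemma abs_le_maxMod (f : ℂ → ℂ) (hc : Continuous f) (z : ℂ) :
    ‖f z‖ ≤ maxMod f (‖z‖) := by
  have hK : IsCompact ((fun z => ‖f z‖) '' Metric.sphere (0 : ℂ) (‖z‖)) :=
    (isCompact_sphere 0 _).image (continuous_norm.comp hc)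
  exact le_csSup hK.bddAbove ⟨z, by simp [mem_sphere_zero_iff_norm], rfl⟩

lemma abs_le_maxMod_of_le (f : ℂ → ℂ) (hd : Differentiable ℂ f) {z : ℂ} {t : ℝ}
    (h : ‖z‖ ≤ t) : ‖f z‖ ≤ maxMod f t := by
  rcases eq_or_lt_of_le h with h' | h'
  · exact h' ▸ abs_le_maxMod f hd.continuous z
  have ht : (0:ℝ) < t := lt_of_le_of_lt (norm_nonneg z) h'
  obtain ⟨w, hw, hw2⟩ := maxMod_attained f hd.continuous ht.le
  have : ∀ u ∈ frontier (Metric.ball (0:ℂ) t), ‖f u‖ ≤ maxMod f t := by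
    intro u hu
    rw [frontier_ball (0:ℂ) ht.ne'] at hu
    have : ‖u‖ = t := by simpa using mem_sphere_zero_iff_norm.mp hu
    calc ‖f u‖ = ‖f u‖ := rfl
    _ ≤ maxMod f (‖u‖) := abs_le_maxMod f hd.continuous u
    _ = maxMod f t := by rw [this]
  have hz : z ∈ closure (Metric.ball (0:ℂ) t) := by
    rw [closure_ball (0:ℂ) ht.ne']
    simpa using h
  exact Complex.norm_le_of_forall_mem_frontier_norm_le isBounded_ball
    hd.diffContOnCl this hz

lemma maxMod_mono (f : ℂ → ℂ) (hd : Differentiable ℂ f) {s t : ℝ} (hs : 0 ≤ s) (hst : s ≤ t) :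
    maxMod f s ≤ maxMod f t := by
  obtain ⟨z, hz, hz2⟩ := maxMod_attained f hd.continuous hs
  rw [hz2]
  exact abs_le_maxMod_of_le f hd (by rw [hz]; exact hst)

lemma maxMod_nonneg (f : ℂ → ℂ) (hc : Continuous f) {r : ℝ} (hr : 0 ≤ r) :
    0 ≤ maxMod f r := by
  obtain ⟨z, _, hz2⟩ := maxMod_attained f hc hr
  rw [hz2]; exact norm_nonneg _

lemma maxMod_three_circles (f : ℂ → ℂ) (hd : Differentiable ℂ f) {p q s : ℝ}
    (hp : 0 < p) (hpq : p < q) (hqs : q < s) :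
    maxMod f q ≤ maxMod f p ^ (1 - Real.log (q/p) / Real.log (s/p)) *
      maxMod f s ^ (Real.log (q/p) / Real.log (s/p)) := by
  set L : ℝ := Real.log (s/p) with hLdef
  set θ : ℝ := Real.log (q/p) / L with hθdef
  have hq : 0 < q := hp.trans hpq
  have hs : 0 < s := hq.trans hqs
  have hL : 0 < L := Real.log_pos ((one_lt_div hp).mpr (hpq.trans hqs))
  have hlogq : 0 < Real.log (q/p) := Real.log_pos ((one_lt_div hp).mpr hpq)
  have hθ0 : 0 < θ := div_pos hlogq hL
  have hθ1 : θ ≤ 1 := by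
    rw [div_le_one hL]
    exact Real.log_le_log (by positivity) (by gcongr)
  obtain ⟨w, hw, hw2⟩ := maxMod_attained f hd.continuous hq.le
  set u : ℂ := w / (q:ℂ) with hu_def
  have hu : ‖u‖ = 1 := by
    rw [hu_def, norm_div, hw]
    simp [Complex.norm_real, abs_of_pos hq, div_self hq.ne']
  set g : ℂ → ℂ := fun z => f (u * (p:ℂ) * Complex.exp (z * (L:ℂ))) with hg_def
  have habs : ∀ z : ℂ, ‖u * (p:ℂ) * Complex.exp (z * (L:ℂ))‖
      = p * Real.exp (z.re * L) := by
    intro z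
    rw [norm_mul, norm_mul, hu, Complex.norm_exp]
    have : (z * (L:ℂ)).re = z.re * L := by simp [Complex.mul_re]
    rw [this]
    simp [Complex.norm_real, abs_of_pos hp]
  have hg : Differentiable ℂ g := by
    apply hd.comp
    exact (differentiable_const _).mul (Complex.differentiable_exp.comp
      (differentiable_id.mul_const _))
  have hBnd : ∀ z : ℂ, z.re ∈ Set.Icc (0:ℝ) 1 → ‖g z‖ ≤ maxMod f s := by
    intro z hz
    apply abs_le_maxMod_of_le f hd
    rw [habs]
    calc p * Real.exp (z.re * L) ≤ p * Real.exp (1 * L) := by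
          apply mul_le_mul_of_nonneg_left _ hp.le
          exact Real.exp_le_exp.mpr (mul_le_mul_of_nonneg_right hz.2 hL.le)
    _ = s := by
          rw [one_mul, hLdef, Real.exp_log (by positivity)]
          field_simp
  have key := Complex.HadamardThreeLines.norm_le_interp_of_mem_verticalClosedStrip₀₁' (f := g)
    (z := (θ:ℂ)) (a := maxMod f p) (b := maxMod f s)
    (by simpa [Complex.HadamardThreeLines.verticalClosedStrip] using ⟨hθ0.le, hθ1⟩)
    (hg.diffContOnCl)
    (⟨maxMod f s, by
      rintro x ⟨z, hz, rfl⟩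
      simp only [Function.comp_apply]
      exact hBnd z (by simpa [Complex.HadamardThreeLines.verticalClosedStrip] using hz)⟩)
    (by
      intro z hz
      simp only [Set.mem_preimage, Set.mem_singleton_iff] at hz
      apply abs_le_maxMod_of_le f hd
      rw [habs, hz]
      simp)
    (by
      intro z hz
      simp only [Set.mem_preimage, Set.mem_singleton_iff] at hz
      apply abs_le_maxMod_of_le f hd
      rw [habs, hz, one_mul, hLdef, Real.exp_log (by positivity)]
      rw [mul_div_assoc']
      rw [mul_comm, mul_div_assoc, div_self hp.ne', mul_one])
  have hgθ : g (θ:ℂ) = f w := by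
    show f (u * (p:ℂ) * Complex.exp ((θ:ℂ) * (L:ℂ))) = f w
    congr 1
    have hθL : θ * L = Real.log (q/p) := by
      rw [hθdef]; field_simp
    have : ((θ:ℂ) * (L:ℂ)) = ((θ * L : ℝ) : ℂ) := by push_cast; ring
    rw [this, hθL, ← Complex.ofReal_exp, Real.exp_log (by positivity)]
    have hp' : (p:ℂ) ≠ 0 := by exact_mod_cast hp.ne'
    have hq' : (q:ℂ) ≠ 0 := by exact_mod_cast hq.ne'
    rw [hu_def]
    push_cast
    field_simp
  rw [hgθ, Complex.ofReal_re, ← hw2] at key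
  exact key

lemma poly_of_growth (n : ℕ) : ∀ (f : ℂ → ℂ), Differentiable ℂ f → ∀ C : ℝ,
    (∀ z, ‖f z‖ ≤ C * max 1 (‖z‖) ^ n) →
    ∃ p : Polynomial ℂ, ∀ z, f z = p.eval z := by
  induction n with
  | zero =>
    intro f hd C h
    have hb : Bornology.IsBounded (Set.range f) := by
      rw [isBounded_iff_forall_norm_le]
      exact ⟨C, by rintro x ⟨z, rfl⟩; simpa using h z⟩
    obtain ⟨c, hc⟩ := hd.exists_eq_const_of_bounded hb
    exact ⟨Polynomial.C c, fun z => by simp [hc]⟩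
  | succ n ih =>
    intro f hd C h
    have hC : 0 ≤ C := le_trans (norm_nonneg _) (by simpa using h 0)
    set g : ℂ → ℂ := dslope f 0 with hg_def
    have hg : Differentiable ℂ g := by
      rw [← differentiableOn_univ] at hd ⊢
      exact (Complex.differentiableOn_dslope univ_mem).mpr hd
    have hf0 : ‖f 0‖ ≤ C := by simpa using h 0
    have hbig : ∀ z : ℂ, 1 ≤ ‖z‖ →
        ‖g z‖ ≤ 2 * C * max 1 (‖z‖) ^ n := by
      intro z hz
      have hz0 : z ≠ 0 := by
        intro hz0; rw [hz0] at hz; simp at hz; linarith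
      have : g z = (z - 0)⁻¹ • (f z - f 0) := dslope_of_ne f hz0
      rw [this]
      simp only [sub_zero, smul_eq_mul]
      rw [norm_mul, norm_inv]
      have hmax : max 1 (‖z‖) = ‖z‖ := max_eq_right hz
      rw [hmax]
      have h1 : ‖f z - f 0‖ ≤ 2 * C * ‖z‖ ^ (n+1) := by
        calc ‖f z - f 0‖ ≤ ‖f z‖ + ‖f 0‖ := by
              simpa using norm_sub_le (f z) (f 0)
        _ ≤ C * ‖z‖ ^ (n+1) + C := by
              have := h z; rw [hmax] at this; linarith
        _ ≤ 2 * C * ‖z‖ ^ (n+1) := by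
              have : (1:ℝ) ≤ ‖z‖ ^ (n+1) := one_le_pow₀ hz
              nlinarith
      rw [inv_mul_le_iff₀ (by linarith : (0:ℝ) < ‖z‖)]
      calc ‖f z - f 0‖ ≤ 2 * C * ‖z‖ ^ (n+1) := h1
      _ = 2 * C * ‖z‖ ^ n * ‖z‖ := by ring
      _ = ‖z‖ * (2 * C * ‖z‖ ^ n) := by ring
    have hsmall : ∀ z : ℂ, ‖z‖ ≤ 1 → ‖g z‖ ≤ 2 * C := by
      intro z hz
      have h1 : ‖g z‖ ≤ maxMod g 1 := abs_le_maxMod_of_le g hg hz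
      obtain ⟨w, hw, hw2⟩ := maxMod_attained g hg.continuous (by norm_num : (0:ℝ) ≤ 1)
      rw [hw2] at h1
      refine h1.trans ?_
      have := hbig w (by rw [hw])
      simpa [hw] using this
    have hgb : ∀ z, ‖g z‖ ≤ (2*C) * max 1 (‖z‖) ^ n := by
      intro z
      rcases le_total (‖z‖) 1 with hz | hz
      · have : (1:ℝ) ≤ max 1 (‖z‖) ^ n := one_le_pow₀ (le_max_left _ _)
        have := hsmall z hz
        nlinarith
      · exact hbig z hz
    obtain ⟨p, hp⟩ := ih g hg (2*C) hgb
    refine ⟨Polynomial.C (f 0) + Polynomial.X * p, fun z => ?_⟩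
    have := sub_smul_dslope f 0 z
    simp only [sub_zero, smul_eq_mul, ← hg_def] at this
    rw [Polynomial.eval_add, Polynomial.eval_C, Polynomial.eval_mul, Polynomial.eval_X, ← hp z]
    linear_combination -this

lemma key_growth (f : ℂ → ℂ) (hf : EntireTranscendental f) (R0 : ℝ) (hR0 : 0 < R0)
    (hM : ∀ r ≥ R0, r < maxMod f r) :
    ∃ ρ1 : ℝ, max R0 1 < ρ1 ∧ ∀ s t : ℝ, ρ1 ≤ s → s ≤ t →
      (t/s)^(4:ℕ) * maxMod f s ≤ maxMod f t := by
  obtain ⟨hd, hnp⟩ := hf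
  set ρ0 : ℝ := max R0 1 with hρ0_def
  have hρ0R0 : R0 ≤ ρ0 := le_max_left _ _
  have hρ01 : (1:ℝ) ≤ ρ0 := le_max_right _ _
  have hρ0pos : (0:ℝ) < ρ0 := lt_of_lt_of_le one_pos hρ01
  set A : ℝ := maxMod f ρ0 with hA_def
  have hA : ρ0 < A := hM ρ0 hρ0R0
  have hApos : 0 < A := hρ0pos.trans hA
  -- positivity of maxMod beyond ρ0
  have hMpos : ∀ x : ℝ, ρ0 ≤ x → A ≤ maxMod f x := fun x hx =>
    maxMod_mono f hd hρ0pos.le hx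
  -- Step 1 : find ρ1
  have step1 : ∃ ρ1 : ℝ, ρ0 < ρ1 ∧ A * (ρ1/ρ0)^(4:ℕ) ≤ maxMod f ρ1 := by
    by_contra hcon
    push_neg at hcon
    apply hnp
    apply poly_of_growth 4 f hd (A * (ρ0+1)^(4:ℕ))
    intro z
    have hCpos : 0 < A * (ρ0+1)^(4:ℕ) := by positivity
    have hmax1 : (1:ℝ) ≤ max 1 (‖z‖) ^ (4:ℕ) := one_le_pow₀ (le_max_left _ _)
    rcases le_or_gt (‖z‖) (ρ0+1) with hz | hz
    · have h1 : ‖f z‖ ≤ maxMod f (ρ0+1) := abs_le_maxMod_of_le f hd hz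
      have h2 : maxMod f (ρ0+1) < A * ((ρ0+1)/ρ0)^(4:ℕ) := hcon _ (by linarith)
      have h3 : ((ρ0+1)/ρ0)^(4:ℕ) ≤ (ρ0+1)^(4:ℕ) := by
        apply pow_le_pow_left₀ (by positivity)
        exact div_le_self (by linarith) hρ01
      calc ‖f z‖ ≤ A * ((ρ0+1)/ρ0)^(4:ℕ) := h1.trans h2.le
      _ ≤ A * (ρ0+1)^(4:ℕ) := by nlinarith
      _ ≤ A * (ρ0+1)^(4:ℕ) * max 1 (‖z‖) ^ (4:ℕ) := le_mul_of_one_le_right hCpos.le hmax1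
    · have h1 : ‖f z‖ ≤ maxMod f (‖z‖) := abs_le_maxMod_of_le f hd le_rfl
      have h2 : maxMod f (‖z‖) < A * (‖z‖/ρ0)^(4:ℕ) := hcon _ (by linarith)
      have hz1 : (1:ℝ) ≤ ‖z‖ := by linarith
      have hmaxeq : max 1 (‖z‖) = ‖z‖ := max_eq_right hz1
      have h3 : (‖z‖/ρ0)^(4:ℕ) ≤ (‖z‖)^(4:ℕ) := by
        apply pow_le_pow_left₀ (by positivity)
        exact div_le_self (by linarith) hρ01
      have h4 : (1:ℝ) ≤ (ρ0+1)^(4:ℕ) := one_le_pow₀ (by linarith)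
      rw [hmaxeq]
      calc ‖f z‖ ≤ A * (‖z‖/ρ0)^(4:ℕ) := (h1.trans_lt h2).le
      _ ≤ A * (‖z‖)^(4:ℕ) := by nlinarith
      _ ≤ A * (ρ0+1)^(4:ℕ) * (‖z‖)^(4:ℕ) :=
          mul_le_mul_of_nonneg_right (le_mul_of_one_le_right hApos.le h4)
            (pow_nonneg (norm_nonneg z) 4)
  obtain ⟨ρ1, hρ1, hkey⟩ := step1
  -- log interp
  have interp : ∀ p q s : ℝ, ρ0 ≤ p → p < q → q < s →
      (Real.log s - Real.log p) * Real.log (maxMod f q) ≤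
      (Real.log s - Real.log q) * Real.log (maxMod f p) +
      (Real.log q - Real.log p) * Real.log (maxMod f s) := by
    intro p q s hp hpq hqs
    have hppos : 0 < p := hρ0pos.trans_le hp
    have hqpos : 0 < q := hppos.trans hpq
    have hspos : 0 < s := hqpos.trans hqs
    have hMp : 0 < maxMod f p := hApos.trans_le (hMpos p hp)
    have hMq : 0 < maxMod f q := hApos.trans_le (hMpos q (hp.trans hpq.le))
    have hMs : 0 < maxMod f s := hApos.trans_le (hMpos s (hp.trans (hpq.trans hqs).le))
    have h3c := maxMod_three_circles f hd hppos hpq hqs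
    set θ : ℝ := Real.log (q/p) / Real.log (s/p) with hθ_def
    have hlog : Real.log (maxMod f q) ≤ (1-θ) * Real.log (maxMod f p) + θ * Real.log (maxMod f s) := by
      calc Real.log (maxMod f q) ≤ Real.log (maxMod f p ^ (1-θ) * maxMod f s ^ θ) :=
            Real.log_le_log hMq h3c
      _ = (1-θ) * Real.log (maxMod f p) + θ * Real.log (maxMod f s) := by
            rw [Real.log_mul (by positivity) (by positivity), Real.log_rpow hMp, Real.log_rpow hMs]
    have hLsp : 0 < Real.log s - Real.log p := sub_pos.mpr (Real.log_lt_log hppos (hpq.trans hqs))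
    have hθeq : θ * (Real.log s - Real.log p) = Real.log q - Real.log p := by
      rw [hθ_def, Real.log_div hqpos.ne' hppos.ne', Real.log_div hspos.ne' hppos.ne']
      field_simp
    have hmul := mul_le_mul_of_nonneg_left hlog hLsp.le
    have hrhs : (Real.log s - Real.log p) * ((1-θ) * Real.log (maxMod f p) + θ * Real.log (maxMod f s))
        = (Real.log s - Real.log q) * Real.log (maxMod f p) + (Real.log q - Real.log p) * Real.log (maxMod f s) := by
      linear_combination (Real.log (maxMod f s) - Real.log (maxMod f p)) * hθeq
    linarith [hmul, hrhs.ge, hrhs.le]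
  -- positivity for logs
  have hρ1pos : 0 < ρ1 := hρ0pos.trans hρ1
  have H1 : 4 * (Real.log ρ1 - Real.log ρ0) ≤ Real.log (maxMod f ρ1) - Real.log A := by
    have h1 : Real.log (A * (ρ1/ρ0)^(4:ℕ)) ≤ Real.log (maxMod f ρ1) :=
      Real.log_le_log (by positivity) hkey
    rw [Real.log_mul hApos.ne' (by positivity), Real.log_pow,
      Real.log_div hρ1pos.ne' hρ0pos.ne'] at h1
    push_cast at h1
    linarith
  refine ⟨ρ1, hρ1, ?_⟩
  intro s t hs hst
  have hspos : 0 < s := hρ1pos.trans_le hs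
  have hsR0 : R0 ≤ s := hρ0R0.trans (hρ1.le.trans hs)
  have hMs : 0 < maxMod f s := lt_trans (hR0.trans_le hsR0) (hM s hsR0)
  rcases eq_or_lt_of_le hst with rfl | hst'
  · rw [div_self hspos.ne']
    simp
  have htpos : 0 < t := hspos.trans hst'
  have htR0 : R0 ≤ t := hsR0.trans hst
  have hMt : 0 < maxMod f t := lt_trans (hR0.trans_le htR0) (hM t htR0)
  -- H2 : slope from ρ0 to s is at least 4
  have H2 : 4 * (Real.log s - Real.log ρ0) ≤ Real.log (maxMod f s) - Real.log A := by
    rcases eq_or_lt_of_le hs with rfl | hs'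
    · exact H1
    · have I1 := interp ρ0 ρ1 s le_rfl hρ1 hs'
      have g1 : 0 < Real.log ρ1 - Real.log ρ0 := sub_pos.mpr (Real.log_lt_log hρ0pos hρ1)
      have g2 : 0 < Real.log s - Real.log ρ1 := sub_pos.mpr (Real.log_lt_log hρ1pos hs')
      rw [← hA_def] at I1
      nlinarith [I1, mul_le_mul_of_nonneg_left H1 (by linarith : (0:ℝ) ≤ (Real.log ρ1 - Real.log ρ0) + (Real.log s - Real.log ρ1)), g1, g2, mul_pos g1 g2]
  have I2 := interp ρ0 s t le_rfl (hρ1.trans_le hs) hst'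
  rw [← hA_def] at I2
  have h1 : 0 < Real.log s - Real.log ρ0 := sub_pos.mpr (Real.log_lt_log hρ0pos (hρ1.trans_le hs))
  have h2 : 0 < Real.log t - Real.log s := sub_pos.mpr (Real.log_lt_log hspos hst')
  have H3 : 4 * (Real.log t - Real.log s) ≤ Real.log (maxMod f t) - Real.log (maxMod f s) := by
    nlinarith [I2, mul_le_mul_of_nonneg_left H2 h2.le, h1, h2, mul_pos h1 h2]
  have hlhs : Real.log ((t/s)^(4:ℕ) * maxMod f s) ≤ Real.log (maxMod f t) := by
    rw [Real.log_mul (by positivity) hMs.ne', Real.log_pow, Real.log_div htpos.ne' hspos.ne']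
    push_cast
    linarith
  exact (Real.log_le_log_iff (by positivity) hMt).mp hlhs

theorem simply_connected_fast_escaping_stmt3
    (f : ℂ → ℂ) (hf : EntireTranscendental f)
    (R0 : ℝ) (hR0 : 0 < R0) (hM : ∀ r ≥ R0, r < maxMod f r)
    (ε : ℝ → ℝ)
    (hε01 : ∀ r ≥ R0, ε r ∈ Set.Ioo (0 : ℝ) 1)
    (hεmono : ∀ r s, R0 ≤ r → r ≤ s → ε s ≤ ε r)
    (hεM : ∀ r ≥ R0, ∀ n : ℕ, 1 ≤ n → ε r ^ (n + 1) ≤ ε ((maxMod f)^[n] r)) :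
    ∃ R1 : ℝ, R0 ≤ R1 ∧ ∀ r R : ℝ, R1 ≤ r → r ≤ R →
      (ε r)⁻¹ ^ 3 * maxMod f (ε r * R) ≤ maxMod f R := by
  classical
  obtain ⟨ρ1, hρ1gt, hρ1key⟩ := key_growth f hf R0 hR0 hM
  have hρ1R0 : R0 ≤ ρ1 := (le_max_left R0 1).trans hρ1gt.le
  have hρ11 : (1:ℝ) < ρ1 := lt_of_le_of_lt (le_max_right R0 1) hρ1gt
  have hρ1pos : (0:ℝ) < ρ1 := lt_trans one_pos hρ11
  -- cube growth beyond ρ2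
  set ρ2 : ℝ := max ρ1 (ρ1^(3:ℕ)) with hρ2def
  have hρ2ρ1 : ρ1 ≤ ρ2 := le_max_left _ _
  have hcube : ∀ t : ℝ, ρ2 ≤ t → t^(3:ℕ) ≤ maxMod f t := by
    intro t ht
    have ht1 : ρ1 ≤ t := hρ2ρ1.trans ht
    have h := hρ1key ρ1 t le_rfl ht1
    have hMρ1 : ρ1 < maxMod f ρ1 := hM ρ1 hρ1R0
    have htpos : (0:ℝ) < t := hρ1pos.trans_le ht1
    have h2 : (t/ρ1)^(4:ℕ) * ρ1 ≤ maxMod f t :=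
      le_trans (by nlinarith [pow_pos (div_pos htpos hρ1pos) 4]) h
    have hρ13 : ρ1^(3:ℕ) ≤ t := (le_max_right _ _).trans ht
    have h3 : t^(3:ℕ) ≤ (t/ρ1)^(4:ℕ) * ρ1 := by
      rw [div_pow, div_mul_eq_mul_div, le_div_iff₀ (by positivity)]
      calc t^(3:ℕ) * ρ1^(4:ℕ) = (t^(3:ℕ)*ρ1) * ρ1^(3:ℕ) := by ring
      _ ≤ (t^(3:ℕ)*ρ1) * t := by
          apply mul_le_mul_of_nonneg_left hρ13 (by positivity)
      _ = t^(4:ℕ) * ρ1 := by ring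
    linarith
  -- base point
  set b0 : ℝ := max ρ2 2 with hb0def
  have hb0ρ2 : ρ2 ≤ b0 := le_max_left _ _
  have hb02 : (2:ℝ) ≤ b0 := le_max_right _ _
  have hb01 : (1:ℝ) < b0 := lt_of_lt_of_le one_lt_two hb02
  have hb0R0 : R0 ≤ b0 := hρ1R0.trans ((hρ2ρ1.trans hb0ρ2))
  have hb0pos : (0:ℝ) < b0 := by linarith
  set δ : ℝ := ε b0 with hδdef
  obtain ⟨hδ0, hδ1⟩ := hε01 b0 hb0R0
  rw [← hδdef] at hδ0 hδ1
  -- iterate growth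
  have hIt : ∀ n : ℕ, b0 ^ (3^n) ≤ (maxMod f)^[n] b0 := by
    intro n; induction n with
    | zero => simp
    | succ n ih =>
      rw [Function.iterate_succ_apply']
      have hx : ρ2 ≤ (maxMod f)^[n] b0 := le_trans (hb0ρ2.trans (le_self_pow₀ hb01.le (by positivity : (0:ℕ) < 3^n).ne')) ih
      calc b0^(3^(n+1)) = (b0^(3^n))^(3:ℕ) := by rw [← pow_mul, pow_succ]
      _ ≤ ((maxMod f)^[n] b0)^(3:ℕ) := pow_le_pow_left₀ (by positivity) ih 3
      _ ≤ maxMod f ((maxMod f)^[n] b0) := hcube _ hx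
  have hItb0 : ∀ n : ℕ, b0 ≤ (maxMod f)^[n] b0 := fun n =>
    le_trans (le_self_pow₀ hb01.le (by positivity : (0:ℕ) < 3^n).ne') (hIt n)
  have hItR0 : ∀ n : ℕ, R0 ≤ (maxMod f)^[n] b0 := fun n => hb0R0.trans (hItb0 n)
  have hItmono : Monotone (fun n : ℕ => (maxMod f)^[n] b0) := by
    apply monotone_nat_of_le_succ
    intro n
    rw [Function.iterate_succ_apply']
    exact (hM _ (hItR0 n)).le
  -- existence of N0
  have hN0ex : ∃ N0 : ℕ, ∀ n ≥ N0, ρ1 ≤ δ ^ (n+2) * b0 ^ (3^n) := by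
    have hb0log : 0 < Real.log b0 := Real.log_pos hb01
    have h1 : (fun n : ℕ => ((n:ℝ))) =o[atTop] (fun n : ℕ => (3:ℝ)^n) := by
      simpa using isLittleO_pow_const_const_pow_of_one_lt (R := ℝ) 1 (by norm_num)
    have h2 : (fun _ : ℕ => (1:ℝ)) =o[atTop] (fun n : ℕ => (3:ℝ)^n) := by
      apply Asymptotics.isLittleO_const_left.mpr
      right
      have : Tendsto (fun n : ℕ => (3:ℝ)^n) atTop atTop :=
        tendsto_pow_atTop_atTop_of_one_lt (by norm_num)
      exact tendsto_abs_atTop_atTop.comp this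
    have hcomb : (fun n : ℕ => ((n:ℝ)+2) * Real.log (1/δ) + Real.log ρ1)
        =o[atTop] (fun n : ℕ => (3:ℝ)^n) := by
      have := (h1.const_mul_left (Real.log (1/δ))).add
        (h2.const_mul_left (2 * Real.log (1/δ) + Real.log ρ1))
      apply this.congr_left
      intro n
      ring
    have hev := hcomb.def hb0log
    rw [Filter.eventually_atTop] at hev
    obtain ⟨N0, hN0⟩ := hev
    refine ⟨N0, fun n hn => ?_⟩
    have hlog := hN0 n hn
    rw [Real.norm_eq_abs, Real.norm_eq_abs, abs_of_nonneg (by positivity : (0:ℝ) ≤ (3:ℝ)^n)] at hlog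
    have hlog2 : ((n:ℝ)+2) * Real.log (1/δ) + Real.log ρ1 ≤ Real.log b0 * (3:ℝ)^n :=
      le_trans (le_abs_self _) hlog
    have hpos : (0:ℝ) < δ^(n+2) * b0^(3^n) := by positivity
    rw [← Real.log_le_log_iff hρ1pos hpos, Real.log_mul (by positivity) (by positivity),
      Real.log_pow, Real.log_pow]
    rw [one_div, Real.log_inv] at hlog2
    push_cast
    nlinarith [hlog2]
  obtain ⟨N0, hN0⟩ := hN0ex
  set R1 : ℝ := (maxMod f)^[N0] b0 with hR1def
  have hR1b0 : b0 ≤ R1 := hItb0 N0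
  have hR1R0 : R0 ≤ R1 := hItR0 N0
  -- main claim : ε R * R is large
  have claim : ∀ R : ℝ, R1 ≤ R → ρ1 ≤ ε R * R := by
    intro R hR
    have hRR0 : R0 ≤ R := hR1R0.trans hR
    obtain ⟨nw, hnw⟩ := pow_unbounded_of_one_lt R hb01
    have hnw3 : R < (maxMod f)^[nw] b0 := by
      refine lt_of_lt_of_le hnw (le_trans ?_ (hIt nw))
      exact pow_le_pow_right₀ hb01.le (Nat.lt_pow_self (n := nw) (by norm_num)).le
    set m : ℕ := max nw N0 with hmdef
    have hm1 : R < (maxMod f)^[m] b0 := lt_of_lt_of_le hnw3 (hItmono (le_max_left _ _))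
    set P : ℕ → Prop := fun j => (maxMod f)^[j] b0 ≤ R with hPdef
    have hPN0 : P N0 := hR
    set k := Nat.findGreatest P m with hkdef
    have hkN0 : N0 ≤ k := Nat.le_findGreatest (le_max_right _ _) hPN0
    have hkP : P k := Nat.findGreatest_spec (le_max_right _ _) hPN0
    have hkm : k ≤ m := Nat.findGreatest_le m
    have hklt : k < m := lt_of_le_of_ne hkm (by
      intro h
      rw [h] at hkP
      exact absurd hkP (not_le.mpr hm1))
    have hnotP : ¬ P (k+1) := by
      refine Nat.findGreatest_is_greatest (n := m) ?_ (by omega)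
      rw [← hkdef]
      omega
    have hRlt : R < (maxMod f)^[k+1] b0 := not_le.mp hnotP
    have hεR : δ ^ (k+2) ≤ ε R := by
      have h1 : δ ^ ((k+1)+1) ≤ ε ((maxMod f)^[k+1] b0) :=
        hεM b0 hb0R0 (k+1) (by omega)
      have h2 : ε ((maxMod f)^[k+1] b0) ≤ ε R := hεmono R _ hRR0 hRlt.le
      calc δ^(k+2) = δ^((k+1)+1) := by ring_nf
      _ ≤ ε ((maxMod f)^[k+1] b0) := h1
      _ ≤ ε R := h2
    have hεRpos : 0 < ε R := (hε01 R hRR0).1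
    calc ρ1 ≤ δ^(k+2) * b0^(3^k) := hN0 k hkN0
    _ ≤ ε R * R := by
        apply mul_le_mul hεR (le_trans (hIt k) hkP) (by positivity) hεRpos.le
  refine ⟨R1, hR1R0, ?_⟩
  intro r R hr hR
  have hrR0 : R0 ≤ r := hR1R0.trans hr
  obtain ⟨hεr0, hεr1⟩ := hε01 r hrR0
  have hRR1 : R1 ≤ R := hr.trans hR
  have hRR0 : R0 ≤ R := hR1R0.trans hRR1
  have hRpos : (0:ℝ) < R := by
    have : (2:ℝ) ≤ R := hb02.trans (hR1b0.trans hRR1)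
    linarith
  have hc := claim R hRR1
  have hεrR : ε R ≤ ε r := hεmono r R hrR0 hR
  have hs : ρ1 ≤ ε r * R := le_trans hc (mul_le_mul_of_nonneg_right hεrR hRpos.le)
  have hsR0 : R0 ≤ ε r * R := hρ1R0.trans hs
  have hst : ε r * R ≤ R := by nlinarith
  have hkey := hρ1key (ε r * R) R hs hst
  have hdiv : R / (ε r * R) = (ε r)⁻¹ := by
    field_simp
  rw [hdiv] at hkey
  have hinv1 : (1:ℝ) ≤ (ε r)⁻¹ := one_le_inv_iff₀.mpr ⟨hεr0, hεr1.le⟩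
  have hMεR : (0:ℝ) ≤ maxMod f (ε r * R) := by
    have := hM (ε r * R) hsR0
    have hp : 0 < ε r * R := by positivity
    linarith
  calc (ε r)⁻¹ ^ 3 * maxMod f (ε r * R) ≤ (ε r)⁻¹ ^ (4:ℕ) * maxMod f (ε r * R) := by
        apply mul_le_mul_of_nonneg_right (pow_le_pow_right₀ hinv1 (by norm_num)) hMεR
  _ ≤ maxMod f R := hkey
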